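/- For n ≥ 3, h_3 = Σ_{i≤j≤k} x_i x_j x_k is not an n-exception: the span of its n first-order partial derivatives together with E^{(2)}(h_3) has dimension n+1. -/

import Mathlib

open MvPolynomial

/-- `E^{(2)}(f) = Σ_j x_j ∂²f/∂x_j²`. -/
noncomputable def polarE2 (n : ℕ) (f : MvPolynomial (Fin n) ℝ) : MvPolynomial (Fin n) ℝ :=
  ∑ j : Fin n, X j * pderiv j (pderiv j f)

/-- The span of the first-order partial derivatives of `f` together with `E^{(2)}(f)`. -/
noncomputable def exceptionSpan (n : ℕ) (f : MvPolynomial (Fin n) ℝ) :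
    Submodule ℝ (MvPolynomial (Fin n) ℝ) :=
  Submodule.span ℝ (Set.range (fun j : Fin n => pderiv j f) ∪ {polarE2 n f})

/-- `f` is an `n`-exception if the span of `∂f/∂x_1, …, ∂f/∂x_n, E^{(2)}(f)`
has dimension exactly `n`. -/
def IsException (n : ℕ) (f : MvPolynomial (Fin n) ℝ) : Prop :=
  Module.finrank ℝ (exceptionSpan n f) = n

/-- The complete homogeneous symmetric polynomial `h_3 = Σ_{i ≤ j ≤ k} x_i x_j x_k`. -/
noncomputable def hsym3 (n : ℕ) : MvPolynomial (Fin n) ℝ :=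
  ∑ s ∈ Finset.univ.sym 3, ((Sym.toMultiset s).map X).prod

open Finsupp

def mdeg {n : ℕ} (μ : Fin n →₀ ℕ) : ℕ := μ.sum fun _ => id

lemma mdeg_single {n : ℕ} (j : Fin n) (c : ℕ) : mdeg (single j c) = c := by
  simp [mdeg, Finsupp.sum_single_index]

lemma mdeg_add {n : ℕ} (μ ν : Fin n →₀ ℕ) : mdeg (μ + ν) = mdeg μ + mdeg ν := by
  simp [mdeg, Finsupp.sum_add_index']

lemma prod_X_multiset {n : ℕ} (m : Multiset (Fin n)) :
    (m.map X).prod = (monomial (Multiset.toFinsupp m) (1 : ℝ)) := by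
  induction m using Multiset.induction_on with
  | empty => simp [Multiset.toFinsupp_zero]
  | cons a s ih =>
      have h : (a ::ₘ s) = ({a} : Multiset (Fin n)) + s := by simp
      rw [h, Multiset.map_add, Multiset.prod_add, Multiset.toFinsupp_add,
        Multiset.toFinsupp_singleton, ih]
      simp [X, monomial_mul]

lemma hsym3_eq (n : ℕ) : hsym3 n
    = ∑ s ∈ Finset.univ.sym 3, monomial (Multiset.toFinsupp (Sym.toMultiset s)) (1:ℝ) :=
  Finset.sum_congr rfl fun s _ => prod_X_multiset _

lemma coeff_hsym3 (n : ℕ) (m : Fin n →₀ ℕ) :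
    coeff m (hsym3 n) = if mdeg m = 3 then (1:ℝ) else 0 := by
  rw [hsym3_eq, coeff_sum]
  simp_rw [coeff_monomial]
  by_cases h : mdeg m = 3
  · rw [if_pos h]
    have hcard : Multiset.card (toMultiset m) = 3 := by
      rw [Finsupp.card_toMultiset]; exact h
    set s0 : Sym (Fin n) 3 := ⟨toMultiset m, hcard⟩ with hs0
    have hmem : s0 ∈ Finset.univ.sym 3 := by rw [Finset.sym_univ]; exact Finset.mem_univ _
    refine (Finset.sum_eq_single_of_mem s0 hmem ?_).trans ?_
    · intro b _ hb
      rw [if_neg]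
      intro hc
      apply hb
      apply Sym.coe_injective
      show Sym.toMultiset b = toMultiset m
      rw [← hc, Multiset.toFinsupp_toMultiset]
    · exact if_pos (Finsupp.toMultiset_toFinsupp m)
  · rw [if_neg h]
    apply Finset.sum_eq_zero
    intro b _
    rw [if_neg]
    intro hc
    apply h
    rw [← hc]
    show (Multiset.toFinsupp (Sym.toMultiset b)).sum (fun _ => id) = 3
    rw [Multiset.toFinsupp_sum_eq]
    exact b.2

lemma coeff_pderiv {n : ℕ} (j : Fin n) (f : MvPolynomial (Fin n) ℝ) (m : Fin n →₀ ℕ) :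
    coeff m (pderiv j f) = ((m j : ℝ) + 1) * coeff (m + single j 1) f := by
  induction f using MvPolynomial.induction_on' with
  | monomial s a =>
      rw [pderiv_monomial, coeff_monomial, coeff_monomial]
      rcases eq_or_ne s (m + single j 1) with h | h
      · subst h
        have h1 : m + single j 1 - single j 1 = m := add_tsub_cancel_right _ _
        have h2 : ((m + single j 1 : Fin n →₀ ℕ)) j = m j + 1 := by simp
        rw [if_pos h1, if_pos rfl, h2]
        push_cast; ring
      · rw [if_neg h, mul_zero]
        rcases Nat.eq_zero_or_pos (s j) with h0 | h0
        · split_ifs <;> simp [h0]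
        · rw [if_neg]
          intro hc
          apply h
          rw [← hc, tsub_add_cancel_of_le]
          rwa [Finsupp.single_le_iff]
  | add p q hp hq => simp [map_add, coeff_add, hp, hq]; ring

lemma coeff_pderiv_hsym3 {n : ℕ} (j : Fin n) (m : Fin n →₀ ℕ) :
    coeff m (pderiv j (hsym3 n)) = if mdeg m = 2 then ((m j : ℝ) + 1) else 0 := by
  rw [coeff_pderiv, coeff_hsym3, mdeg_add, mdeg_single]
  by_cases h : mdeg m = 2
  · simp [h]
  · have h3 : ¬ (mdeg m + 1 = 3) := by omega
    simp [h, h3]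

lemma coeff_pd2 {n : ℕ} (j : Fin n) (m : Fin n →₀ ℕ) :
    coeff m (pderiv j (pderiv j (hsym3 n)))
      = if mdeg m = 1 then ((m j : ℝ) + 1) * ((m j : ℝ) + 2) else 0 := by
  rw [coeff_pderiv, coeff_pderiv_hsym3, mdeg_add, mdeg_single]
  have hap : ((m + single j 1 : Fin n →₀ ℕ)) j = m j + 1 := by simp
  by_cases h : mdeg m = 1
  · rw [if_pos (by omega), if_pos h, hap]
    push_cast; ring
  · rw [if_neg (by omega), if_neg h, mul_zero]


lemma coeff_E2_offdiag {n : ℕ} (i k : Fin n) (hik : i ≠ k) :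
    coeff (single i 1 + single k 1) (polarE2 n (hsym3 n)) = 4 := by
  classical
  unfold polarE2
  rw [coeff_sum]
  simp_rw [coeff_X_mul']
  have key : ∀ j : Fin n,
      (if j ∈ (single i 1 + single k 1 : Fin n →₀ ℕ).support then
        coeff ((single i 1 + single k 1 : Fin n →₀ ℕ) - single j 1)
          (pderiv j (pderiv j (hsym3 n))) else 0)
      = (if j = i then (2:ℝ) else 0) + (if j = k then 2 else 0) := by
    intro j
    by_cases hji : j = i
    · subst hji
      have hmem : j ∈ (single j 1 + single k 1 : Fin n →₀ ℕ).support := by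
        simp [Finsupp.mem_support_iff, Finsupp.single_apply, Ne.symm hik]
      have hsub : (single j 1 + single k 1 : Fin n →₀ ℕ) - single j 1 = single k 1 := by
        rw [add_comm, add_tsub_cancel_right]
      rw [if_pos hmem, hsub, coeff_pd2, if_pos (by rw [mdeg_single]),
        if_pos rfl, if_neg hik]
      simp [Finsupp.single_apply, Ne.symm hik]
    · by_cases hjk : j = k
      · subst hjk
        have hmem : j ∈ (single i 1 + single j 1 : Fin n →₀ ℕ).support := by
          simp [Finsupp.mem_support_iff, Finsupp.single_apply, hji]
        have hsub : (single i 1 + single j 1 : Fin n →₀ ℕ) - single j 1 = single i 1 := by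
          rw [add_tsub_cancel_right]
        rw [if_pos hmem, hsub, coeff_pd2, if_pos (by rw [mdeg_single]),
          if_neg hji, if_pos rfl]
        simp [Finsupp.single_apply, Ne.symm hji]
      · have hmem : j ∉ (single i 1 + single k 1 : Fin n →₀ ℕ).support := by
          simp [Finsupp.mem_support_iff, Finsupp.single_apply,
            Ne.symm hji, Ne.symm hjk]
        rw [if_neg hmem, if_neg hji, if_neg hjk]
        norm_num
  rw [Finset.sum_congr rfl fun j _ => key j, Finset.sum_add_distrib]
  rw [Finset.sum_ite_eq' Finset.univ i (fun _ => (2:ℝ)),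
    Finset.sum_ite_eq' Finset.univ k (fun _ => (2:ℝ))]
  simp
  norm_num

lemma coeff_E2_diag {n : ℕ} (i : Fin n) :
    coeff (single i 2) (polarE2 n (hsym3 n)) = 6 := by
  classical
  unfold polarE2
  rw [coeff_sum]
  simp_rw [coeff_X_mul']
  have key : ∀ j : Fin n,
      (if j ∈ (single i 2 : Fin n →₀ ℕ).support then
        coeff ((single i 2 : Fin n →₀ ℕ) - single j 1)
          (pderiv j (pderiv j (hsym3 n))) else 0)
      = if j = i then (6:ℝ) else 0 := by
    intro j
    by_cases hji : j = i
    · subst hji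
      have hmem : j ∈ (single j 2 : Fin n →₀ ℕ).support := by
        simp [Finsupp.mem_support_iff]
      have hsub : (single j 2 : Fin n →₀ ℕ) - single j 1 = single j 1 := by
        rw [← Finsupp.single_tsub]
      rw [if_pos hmem, hsub, coeff_pd2, if_pos (by rw [mdeg_single]), if_pos rfl]
      simp
      norm_num
    · have hmem : j ∉ (single i 2 : Fin n →₀ ℕ).support := by
        simp [Finsupp.mem_support_iff, Finsupp.single_apply, Ne.symm hji, hji]
      rw [if_neg hmem, if_neg hji]
  rw [Finset.sum_congr rfl fun j _ => key j,
    Finset.sum_ite_eq' Finset.univ i (fun _ => (6:ℝ))]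
  simp

noncomputable def vfam (n : ℕ) : (Fin n ⊕ Unit) → MvPolynomial (Fin n) ℝ :=
  Sum.elim (fun j => pderiv j (hsym3 n)) (fun _ => polarE2 n (hsym3 n))

lemma vfam_indep (n : ℕ) (hn : 3 ≤ n) : LinearIndependent ℝ (vfam n) := by
  classical
  rw [Fintype.linearIndependent_iff]
  intro g hg
  set c : Fin n → ℝ := fun j => g (Sum.inl j) with hc
  set d : ℝ := g (Sum.inr ()) with hd
  have hsum : ∀ m : Fin n →₀ ℕ,
      (∑ j, c j * coeff m (pderiv j (hsym3 n)))
        + d * coeff m (polarE2 n (hsym3 n)) = 0 := by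
    intro m
    have h0 := congrArg (coeff m) hg
    rw [coeff_sum] at h0
    simpa [Fintype.sum_sum_type, vfam, coeff_smul, smul_eq_mul] using h0
  have Eoff : ∀ i k : Fin n, i ≠ k → (∑ j, c j) + (c i + c k) + 4 * d = 0 := by
    intro i k hik
    have h1 := hsum (single i 1 + single k 1)
    rw [coeff_E2_offdiag i k hik] at h1
    have h2 : ∀ j : Fin n, coeff (single i 1 + single k 1) (pderiv j (hsym3 n))
        = (if i = j then (1:ℝ) else 0) + (if k = j then 1 else 0) + 1 := by
      intro j
      rw [coeff_pderiv_hsym3,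
        if_pos (by rw [mdeg_add, mdeg_single, mdeg_single])]
      simp only [Finsupp.add_apply, Finsupp.single_apply]
      split_ifs <;> norm_num
    simp_rw [h2, mul_add, mul_one, Finset.sum_add_distrib, mul_ite, mul_zero] at h1
    rw [Finset.sum_ite_eq Finset.univ i (fun x => c x * 1),
      Finset.sum_ite_eq Finset.univ k (fun x => c x * 1)] at h1
    simp only [mul_one] at h1
    simp only [Finset.mem_univ, if_true] at h1
    linarith
  have Ediag : ∀ i : Fin n, (∑ j, c j) + 2 * c i + 6 * d = 0 := by
    intro i
    have h1 := hsum (single i 2)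
    rw [coeff_E2_diag i] at h1
    have h2 : ∀ j : Fin n, coeff (single i 2) (pderiv j (hsym3 n))
        = (if i = j then (2:ℝ) else 0) + 1 := by
      intro j
      rw [coeff_pderiv_hsym3, if_pos (by rw [mdeg_single])]
      simp only [Finsupp.single_apply]
      split_ifs <;> norm_num
    simp_rw [h2, mul_add, mul_one, Finset.sum_add_distrib, mul_ite, mul_zero] at h1
    rw [Finset.sum_ite_eq Finset.univ i (fun x => c x * 2)] at h1
    simp only [Finset.mem_univ, if_true] at h1
    linarith
  have hthird : ∀ a b : Fin n, ∃ t : Fin n, t ≠ a ∧ t ≠ b := by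
    intro a b
    by_contra hcon
    push_neg at hcon
    have hsub : (Finset.univ : Finset (Fin n)) ⊆ {a, b} := by
      intro t _
      simp only [Finset.mem_insert, Finset.mem_singleton]
      by_contra h'
      push_neg at h'
      exact h'.2 (hcon t h'.1)
    have h1 := Finset.card_le_card hsub
    have h2 : ({a, b} : Finset (Fin n)).card ≤ 2 :=
      (Finset.card_insert_le _ _).trans (by simp)
    rw [Finset.card_univ, Fintype.card_fin] at h1
    omega
  have hall : ∀ a b : Fin n, c a = c b := by
    intro a b
    rcases eq_or_ne a b with rfl | hab
    · rfl
    obtain ⟨t, hta, htb⟩ := hthird a b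
    have e1 := Eoff t a hta
    have e2 := Eoff t b htb
    linarith
  let i0 : Fin n := ⟨0, by omega⟩
  let i1 : Fin n := ⟨1, by omega⟩
  have hne : i0 ≠ i1 := Fin.ne_of_val_ne (by norm_num)
  have hd0 : d = 0 := by
    have e1 := Eoff i0 i1 hne
    have e2 := Ediag i0
    have e3 := hall i1 i0
    linarith
  have hS : (∑ j, c j) = n * c i0 := by
    rw [Finset.sum_congr rfl fun j _ => hall j i0]
    simp [mul_comm]
  have hc0 : c i0 = 0 := by
    have e2 := Ediag i0
    rw [hS, hd0] at e2
    have : ((n : ℝ) + 2) * c i0 = 0 := by linarith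
    have hn2 : ((n : ℝ) + 2) ≠ 0 := by positivity
    exact (mul_eq_zero.mp this).resolve_left hn2
  intro i
  rcases i with j | u
  · show c j = 0
    rw [hall j i0, hc0]
  · show d = 0
    exact hd0

/-- For `n ≥ 3`, `h_3` is not an `n`-exception: the span of its first-order
partials together with `E^{(2)}(h_3)` has dimension `n + 1`. -/
theorem hsym3_not_exception (n : ℕ) (hn : 3 ≤ n) :
    Module.finrank ℝ (exceptionSpan n (hsym3 n)) = n + 1 := by
  have hspan : exceptionSpan n (hsym3 n) = Submodule.span ℝ (Set.range (vfam n)) := by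
    unfold exceptionSpan vfam
    rw [Set.Sum.elim_range, Set.range_const]
  rw [hspan, finrank_span_eq_card (vfam_indep n hn)]
  simp
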